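/- Let G be a simple graph, x a leaf (vertex of degree one) of G, and y the unique neighbour of x. Then for every integer t ≥ 2, the colon ideal I(G)^t : (xy) equals I(G)^{t-1}. -/

import Mathlib

open MvPolynomial

noncomputable section

/-- The homogeneous maximal ideal of the polynomial ring. -/
def maxIdeal (k : Type) [Field k] (σ : Type) : Ideal (MvPolynomial σ k) :=
  Ideal.span (Set.range MvPolynomial.X)

/-- The depth of a module over the polynomial ring, with respect to the homogeneous
maximal ideal: the supremum of lengths of regular sequences contained in it. -/
def moduleDepth (k : Type) [Field k] (σ : Type) (M : Type)
    [AddCommGroup M] [Module (MvPolynomial σ k) M] : ℕ :=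
  sSup {d : ℕ | ∃ rs : List (MvPolynomial σ k), rs.length = d ∧
    (∀ r ∈ rs, r ∈ maxIdeal k σ) ∧ RingTheory.Sequence.IsRegular M rs}

/-- depth of S/I. -/
def quotDepth (k : Type) [Field k] (σ : Type) (I : Ideal (MvPolynomial σ k)) : ℕ :=
  moduleDepth k σ (MvPolynomial σ k ⧸ I)

/-- The edge ideal of a simple graph. -/
def edgeIdeal (k : Type) [Field k] (σ : Type) (G : SimpleGraph σ) : Ideal (MvPolynomial σ k) :=
  Ideal.span {m | ∃ i j, G.Adj i j ∧ m = MvPolynomial.X i * MvPolynomial.X j}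

/-- The variable `x_{i+1}` (`1`-based `i+1`, `0`-based `i`) of `k[x_1,…,x_n]`,
or `1` if out of range. -/
def Xv (k : Type) [Field k] (n : ℕ) (i : ℕ) : MvPolynomial (Fin n) k :=
  if h : i < n then MvPolynomial.X ⟨i, h⟩ else 1

namespace ColonLeaf

open Pointwise

variable {k : Type} [Field k] {σ : Type} (G : SimpleGraph σ)

/-- Exponent vectors of edges. -/
def edgeExp : Set (σ →₀ ℕ) :=
  {e | ∃ i j, G.Adj i j ∧ e = Finsupp.single i 1 + Finsupp.single j 1}

/-- Exponent vectors which are sums of `t` edge exponent vectors. -/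
def eSums (t : ℕ) : Set (σ →₀ ℕ) :=
  {s | ∃ M : Multiset (σ →₀ ℕ), Multiset.card M = t ∧ (∀ e ∈ M, e ∈ edgeExp G) ∧ s = M.sum}

lemma X_mul_X (i j : σ) :
    (MvPolynomial.X i * MvPolynomial.X j : MvPolynomial σ k)
      = monomial (Finsupp.single i 1 + Finsupp.single j 1) 1 := by
  rw [MvPolynomial.X, MvPolynomial.X, monomial_mul, one_mul]

lemma edgeIdeal_eq :
    edgeIdeal k σ G = Ideal.span ((fun s => monomial s (1 : k)) '' edgeExp G) := by
  unfold edgeIdeal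
  congr 1
  ext m
  constructor
  · rintro ⟨i, j, hij, rfl⟩
    exact ⟨Finsupp.single i 1 + Finsupp.single j 1, ⟨i, j, hij, rfl⟩, (X_mul_X i j).symm⟩
  · rintro ⟨s, ⟨i, j, hij, rfl⟩, rfl⟩
    exact ⟨i, j, hij, (X_mul_X i j).symm⟩

lemma image_mul_image (A B : Set (σ →₀ ℕ)) :
    ((fun s => monomial s (1 : k)) '' A) * ((fun s => monomial s (1 : k)) '' B)
      = (fun s => monomial s (1 : k)) '' (A + B) := by
  ext z
  simp only [Set.mem_mul, Set.mem_image, Set.mem_add]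
  constructor
  · rintro ⟨_, ⟨a, ha, rfl⟩, _, ⟨b, hb, rfl⟩, rfl⟩
    exact ⟨a + b, ⟨a, ha, b, hb, rfl⟩, by rw [monomial_mul, one_mul]⟩
  · rintro ⟨_, ⟨a, ha, b, hb, rfl⟩, rfl⟩
    exact ⟨_, ⟨a, ha, rfl⟩, _, ⟨b, hb, rfl⟩, by rw [monomial_mul, one_mul]⟩

lemma eSums_add_one (t : ℕ) : eSums G t + edgeExp G = eSums G (t + 1) := by
  classical
  ext s
  simp only [Set.mem_add]
  constructor
  · rintro ⟨a, ⟨M, hc, hM, rfl⟩, b, hb, rfl⟩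
    refine ⟨b ::ₘ M, by simp [hc], ?_, ?_⟩
    · intro e he
      rcases Multiset.mem_cons.mp he with h | h
      · exact h ▸ hb
      · exact hM e h
    · rw [Multiset.sum_cons, add_comm]
  · rintro ⟨M, hc, hM, rfl⟩
    have hne : M ≠ 0 := by
      intro h; rw [h] at hc; simp at hc
    obtain ⟨e, he⟩ := Multiset.exists_mem_of_ne_zero hne
    refine ⟨(M.erase e).sum, ⟨M.erase e, ?_, fun f hf => hM f (Multiset.mem_of_mem_erase hf), rfl⟩,
      e, hM e he, ?_⟩
    · rw [Multiset.card_erase_of_mem he, hc]; rfl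
    · rw [add_comm, ← Multiset.sum_cons, Multiset.cons_erase he]

lemma pow_eq (t : ℕ) :
    edgeIdeal k σ G ^ t = Ideal.span ((fun s => monomial s (1 : k)) '' eSums G t) := by
  induction t with
  | zero =>
    have h0 : eSums G 0 = {0} := by
      ext s
      simp only [eSums, Set.mem_setOf_eq, Multiset.card_eq_zero, Set.mem_singleton_iff]
      constructor
      · rintro ⟨M, rfl, -, rfl⟩; simp
      · rintro rfl; exact ⟨0, rfl, by simp, by simp⟩
    rw [pow_zero, Ideal.one_eq_top, h0]
    have : (fun s => monomial s (1 : k)) '' {0} = {(1 : MvPolynomial σ k)} := by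
      rw [Set.image_singleton, monomial_zero', MvPolynomial.C_1]
    rw [this, Ideal.span_singleton_one]
  | succ n ih =>
    rw [pow_succ, ih, edgeIdeal_eq G, Ideal.span_mul_span', image_mul_image,
      eSums_add_one]

lemma sum_apply_eq_zero {v : σ} {M : Multiset (σ →₀ ℕ)} (h : ∀ e ∈ M, e v = 0) :
    M.sum v = 0 := by
  induction M using Multiset.induction with
  | empty => simp
  | cons a N ih =>
    rw [Multiset.sum_cons, Finsupp.add_apply, h a (Multiset.mem_cons_self a N),
      ih fun e he => h e (Multiset.mem_cons_of_mem he)]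

lemma key {x y : σ} (hxy : G.Adj x y) (hleaf : G.neighborSet x = {y}) {t : ℕ} (ht : 1 ≤ t)
    {d s : σ →₀ ℕ} (hs : s ∈ eSums G t)
    (hle : s ≤ d + (Finsupp.single x 1 + Finsupp.single y 1)) :
    ∃ s' ∈ eSums G (t - 1), s' ≤ d := by
  classical
  obtain ⟨M, hc, hM, rfl⟩ := hs
  have hxney : x ≠ y := hxy.ne
  have hnbr : ∀ z, G.Adj x z → z = y := by
    intro z hz
    have : z ∈ G.neighborSet x := hz
    rw [hleaf] at this
    exact this
  have hedge_x : ∀ e ∈ M, e x ≠ 0 → e = Finsupp.single x 1 + Finsupp.single y 1 := by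
    intro e he hex
    obtain ⟨i, j, hij, rfl⟩ := hM e he
    rw [Finsupp.add_apply, Finsupp.single_apply, Finsupp.single_apply] at hex
    by_cases hix : i = x
    · subst hix
      have : j = y := hnbr j hij
      subst this; rfl
    · have hjx : j = x := by
        by_contra hjx
        rw [if_neg hix, if_neg hjx] at hex
        exact hex rfl
      subst hjx
      have : i = y := hnbr i hij.symm
      subst this
      rw [add_comm]
  -- pick the element to erase
  suffices h : ∃ e ∈ M, ∀ v, (M.erase e).sum v ≤ d v by
    obtain ⟨e, he, hkey⟩ := h
    refine ⟨(M.erase e).sum,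
      ⟨M.erase e, by rw [Multiset.card_erase_of_mem he, hc]; rfl,
        fun f hf => hM f (Multiset.mem_of_mem_erase hf), rfl⟩,
      Finsupp.le_def.mpr hkey⟩
  have hne : M ≠ 0 := by
    intro h; rw [h] at hc; simp at hc; omega
  have hsum' : ∀ e ∈ M, ∀ v, M.sum v = e v + (M.erase e).sum v := by
    intro e he v
    conv_lhs => rw [← Multiset.cons_erase he, Multiset.sum_cons]
    rw [Finsupp.add_apply]
  have hlev : ∀ v, M.sum v ≤ d v + ((Finsupp.single x 1 : σ →₀ ℕ) v
      + (Finsupp.single y 1 : σ →₀ ℕ) v) := by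
    intro v
    have := Finsupp.le_def.mp hle v
    rwa [Finsupp.add_apply, Finsupp.add_apply] at this
  have hsxx : (Finsupp.single x 1 : σ →₀ ℕ) x = 1 := Finsupp.single_eq_same
  have hsyy : (Finsupp.single y 1 : σ →₀ ℕ) y = 1 := Finsupp.single_eq_same
  have hsxy : (Finsupp.single x 1 : σ →₀ ℕ) y = 0 := Finsupp.single_eq_of_ne' hxney
  have hsyx : (Finsupp.single y 1 : σ →₀ ℕ) x = 0 := Finsupp.single_eq_of_ne' hxney.symm
  by_cases hA : ∃ e ∈ M, e x ≠ 0
  · obtain ⟨e, he, hex⟩ := hA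
    have heq := hedge_x e he hex
    subst heq
    refine ⟨_, he, fun v => ?_⟩
    have h1 := hlev v
    rw [hsum' _ he v, Finsupp.add_apply] at h1
    omega
  · push_neg at hA
    have hMx : M.sum x = 0 := sum_apply_eq_zero hA
    by_cases hB : ∃ e ∈ M, e y ≠ 0
    · obtain ⟨e, he, hey⟩ := hB
      refine ⟨e, he, fun v => ?_⟩
      have h1 := hlev v
      rw [hsum' e he v] at h1
      by_cases hvx : v = x
      · have h0 := hMx
        rw [hsum' e he x] at h0
        rw [hvx]
        omega
      · by_cases hvy : v = y
        · rw [hvy] at h1 ⊢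
          rw [hsxy, hsyy] at h1
          omega
        · rw [Finsupp.single_eq_of_ne' (fun h => hvx h.symm),
            Finsupp.single_eq_of_ne' (fun h => hvy h.symm)] at h1
          omega
    · push_neg at hB
      have hMy : M.sum y = 0 := sum_apply_eq_zero hB
      obtain ⟨e, he⟩ := Multiset.exists_mem_of_ne_zero hne
      refine ⟨e, he, fun v => ?_⟩
      have h1 := hlev v
      rw [hsum' e he v] at h1
      by_cases hvx : v = x
      · have h0 := hMx
        rw [hsum' e he x] at h0
        rw [hvx]
        omega
      · by_cases hvy : v = y
        · have h0 := hMy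
          rw [hsum' e he y] at h0
          rw [hvy]
          omega
        · rw [Finsupp.single_eq_of_ne' (fun h => hvx h.symm),
            Finsupp.single_eq_of_ne' (fun h => hvy h.symm)] at h1
          omega

end ColonLeaf

theorem colon_leaf_edge (k σ : Type) [Field k] (G : SimpleGraph σ) (x y : σ)
    (hleaf : G.neighborSet x = {y}) (t : ℕ) (ht : 2 ≤ t) :
    (edgeIdeal k σ G ^ t).colon
        ((Ideal.span {MvPolynomial.X x * MvPolynomial.X y} : Ideal (MvPolynomial σ k)) :
          Set (MvPolynomial σ k)) =
      edgeIdeal k σ G ^ (t - 1) := by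
  classical
  have hxy : G.Adj x y := by
    have : y ∈ G.neighborSet x := by rw [hleaf]; exact rfl
    exact this
  ext f
  rw [Ideal.mem_colon_span_singleton]
  constructor
  · intro hf
    rw [ColonLeaf.pow_eq G t, mem_ideal_span_monomial_image] at hf
    rw [ColonLeaf.pow_eq G (t - 1), mem_ideal_span_monomial_image]
    intro m hm
    have hm' : m + Finsupp.single x 1 + Finsupp.single y 1
        ∈ (f * (MvPolynomial.X x * MvPolynomial.X y)).support := by
      have hcomm : f * (MvPolynomial.X x * MvPolynomial.X y)
          = f * MvPolynomial.X x * MvPolynomial.X y := by ring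
      rw [hcomm, MvPolynomial.support_mul_X, MvPolynomial.support_mul_X]
      refine Finset.mem_map_of_mem _ (Finset.mem_map_of_mem _ hm)
    obtain ⟨s, hs, hle⟩ := hf _ hm'
    exact ColonLeaf.key G hxy hleaf (by omega : 1 ≤ t) hs (by rwa [← add_assoc])
  · intro hf
    have h1 : MvPolynomial.X x * MvPolynomial.X y ∈ edgeIdeal k σ G :=
      Ideal.subset_span ⟨x, y, hxy, rfl⟩
    have ht' : t - 1 + 1 = t := by omega
    rw [← ht', pow_succ]
    exact Ideal.mul_mem_mul hf h1
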